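/- Assume the relative quality functions satisfy q_j(A) = 1/(n·C(n−1,|A|)) for every j ∈ C and A ⊆ C∖{j}. Then for every nonempty M ⊆ C and k ∈ {1,…,m}, p_M^{(k)} = ∑_{A⊆C, |M∩A|=m−k+1} ((m−k+1)/(n·C(n−1,|A|−1)))·φ(A) − ∑_{A⊆C, |M∩A|=m−k} (k/(n·C(n−1,|A|)))·φ(A). -/

import Mathlib

open MeasureTheory Finset

/-- Lifetime of the (sub)system on component set `D` with structure function `χ`
(the maximum over the sets `A ⊆ D` with `χ A = 1` of `min_{i ∈ A} T i`). -/
noncomputable def sysLifeOn {Ω : Type*} {n : ℕ} (T : Fin n → Ω → ℝ)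
    (D : Finset (Fin n)) (χ : Finset (Fin n) → ℝ) (ω : Ω) : ℝ :=
  if h : (D.powerset.filter fun A => χ A = 1).Nonempty then
    (D.powerset.filter fun A => χ A = 1).sup' h
      (fun A => if hA : A.Nonempty then A.inf' hA fun i => T i ω else 0)
  else 0

/-- The `k`-th order statistic of the lifetimes `(T i)_{i ∈ M}`. -/
noncomputable def orderStat {Ω : Type*} {n : ℕ} (T : Fin n → Ω → ℝ)
    (M : Finset (Fin n)) (k : ℕ) (ω : Ω) : ℝ :=
  ((M.val.map fun i => T i ω).sort (· ≤ ·)).getD (k - 1) 0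

/-- The relative quality function `q_j(A) = Pr(max_{i ∈ C∖A} T_i = T_j < min_{i ∈ A} T_i)`. -/
noncomputable def relQual {Ω : Type*} [MeasurableSpace Ω] {n : ℕ} (μ : Measure Ω)
    (T : Fin n → Ω → ℝ) (j : Fin n) (A : Finset (Fin n)) : ℝ :=
  (μ {ω | (∀ i ∉ A, T i ω ≤ T j ω) ∧ ∀ i ∈ A, T j ω < T i ω}).toReal

section AuxLemmas


lemma filt_len_getD : ∀ (l : List ℝ), l.Pairwise (· < ·) → ∀ p, p < l.length →
    (l.filter (fun x => decide (x < l.getD p 0))).length = p := by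
  intro l hl
  induction l with
  | nil => intro p hp; simp at hp
  | cons a tl ih =>
    intro p hp
    cases p with
    | zero =>
      simp only [List.getD_cons_zero]
      rw [List.filter_eq_nil_iff.2]
      · rfl
      · intro x hx
        rcases List.mem_cons.1 hx with h | h
        · simp [h]
        · simp only [decide_eq_true_eq]
          exact not_lt.2 (le_of_lt (List.rel_of_pairwise_cons hl h))
    | succ p =>
      have htl : tl.Pairwise (· < ·) := hl.of_cons
      have hp' : p < tl.length := by simpa using hp
      have hm : tl.getD p 0 ∈ tl := by
        rw [List.getD_eq_getElem _ _ hp']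
        exact List.getElem_mem _
      have ha : a < tl.getD p 0 := List.rel_of_pairwise_cons hl hm
      simp only [List.getD_cons_succ, List.filter_cons, ha, decide_true]
      simp only [ha, decide_eq_true_eq, if_pos, List.length_cons]
      rw [ih htl p hp']

-- count of elements of M with f-value < f j, as Finset card
lemma count_lt_inj {α : Type*} [DecidableEq α] {M : Finset α} {f : α → ℝ}
    (hinj : Set.InjOn f M) {j j' : α} (hj : j ∈ M) (hj' : j' ∈ M)
    (h : (M.filter fun i => f i < f j).card = (M.filter fun i => f i < f j').card) :
    f j = f j' := by
  by_contra hne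
  rcases lt_or_gt_of_ne hne with hlt | hlt
  · have hsub : (M.filter fun i => f i < f j) ⊆ (M.filter fun i => f i < f j') := by
      intro i hi
      simp only [mem_filter] at hi ⊢
      exact ⟨hi.1, hi.2.trans hlt⟩
    have hjmem : j ∈ M.filter fun i => f i < f j' := by simp [hj, hlt]
    have hjnot : j ∉ M.filter fun i => f i < f j := by simp
    have : (M.filter fun i => f i < f j).card < (M.filter fun i => f i < f j').card :=
      Finset.card_lt_card (Finset.ssubset_iff_of_subset hsub |>.2 ⟨j, hjmem, hjnot⟩)
    omega
  · have hsub : (M.filter fun i => f i < f j') ⊆ (M.filter fun i => f i < f j) := by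
      intro i hi
      simp only [mem_filter] at hi ⊢
      exact ⟨hi.1, hi.2.trans hlt⟩
    have hjmem : j' ∈ M.filter fun i => f i < f j := by simp [hj', hlt]
    have hjnot : j' ∉ M.filter fun i => f i < f j' := by simp
    have : (M.filter fun i => f i < f j').card < (M.filter fun i => f i < f j).card :=
      Finset.card_lt_card (Finset.ssubset_iff_of_subset hsub |>.2 ⟨j', hjmem, hjnot⟩)
    omega

lemma orderStat_exists {Ω : Type*} {n : ℕ} {T : Fin n → Ω → ℝ} {M : Finset (Fin n)} {k : ℕ}
    {ω : Ω} (hinj : Set.InjOn (fun i => T i ω) M) (hk1 : 1 ≤ k) (hkm : k ≤ M.card) :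
    ∃ j ∈ M, T j ω = orderStat T M k ω ∧
      (M.filter fun i => T i ω < T j ω).card = k - 1 := by
  classical
  set f : Fin n → ℝ := fun i => T i ω with hf
  set l : List ℝ := (M.val.map f).sort (· ≤ ·) with hl
  have hlen : l.length = M.card := by
    rw [hl, Multiset.length_sort, Multiset.card_map]; rfl
  have hk' : k - 1 < l.length := by omega
  have hcoe : (l : Multiset ℝ) = M.val.map f := Multiset.sort_eq _ _
  have hnodupM : (M.val.map f).Nodup := Multiset.Nodup.map_on (fun x hx y hy => hinj hx hy) M.nodup
  have hnodup : l.Nodup := by rw [← Multiset.coe_nodup, hcoe]; exact hnodupM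
  have hsorted : l.Pairwise (· ≤ ·) := Multiset.pairwise_sort _ _
  have hstrict : l.Pairwise (· < ·) := by
    exact (List.Pairwise.and hsorted hnodup).imp (fun h => lt_of_le_of_ne h.1 h.2)
  set t : ℝ := l.getD (k - 1) 0 with ht
  have htos : orderStat T M k ω = t := rfl
  have htmem : t ∈ l := by
    rw [ht, List.getD_eq_getElem _ _ hk']
    exact List.getElem_mem _
  have htmem' : t ∈ M.val.map f := by rw [← hcoe]; exact htmem
  obtain ⟨j, hjM, hjt⟩ := Multiset.mem_map.1 htmem'
  refine ⟨j, hjM, by rw [htos, ← hjt], ?_⟩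
  have hcount : (l.filter (fun x => decide (x < t))).length = k - 1 :=
    filt_len_getD l hstrict _ hk'
  -- translate list filter length to finset card
  have h1 : (l.filter (fun x => decide (x < t))).length
      = Multiset.card (Multiset.filter (fun x => x < t) (M.val.map f)) := by
    rw [← hcoe]
    simp [Multiset.filter_coe]
  have h2 : Multiset.filter (fun x => x < t) (M.val.map f)
      = Multiset.map f (Multiset.filter (fun i => f i < t) M.val) := by
    rw [Multiset.filter_map]; rfl
  have h3 : (M.filter fun i => T i ω < T j ω).card
      = Multiset.card (Multiset.filter (fun i => f i < t) M.val) := by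
    show Multiset.card (Multiset.filter _ M.val) = _
    congr 1
    apply Multiset.filter_congr
    intro i _
    rw [← hjt]
  rw [h3, ← Multiset.card_map f, ← h2, ← h1, hcount]

lemma orderStat_iff {Ω : Type*} {n : ℕ} {T : Fin n → Ω → ℝ} {M : Finset (Fin n)} {k : ℕ}
    {ω : Ω} (hinj : Set.InjOn (fun i => T i ω) M) (hk1 : 1 ≤ k) (hkm : k ≤ M.card)
    {j : Fin n} (hj : j ∈ M) :
    orderStat T M k ω = T j ω ↔ (M.filter fun i => T i ω < T j ω).card = k - 1 := by
  obtain ⟨j', hj'M, hj't, hj'c⟩ := orderStat_exists hinj hk1 hkm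
  constructor
  · intro h
    have : T j' ω = T j ω := by rw [hj't, h]
    have hjj : (M.filter fun i => T i ω < T j ω) = (M.filter fun i => T i ω < T j' ω) := by
      apply Finset.filter_congr; intro i _; rw [this]
    rw [hjj, hj'c]
  · intro h
    have h2 := count_lt_inj (f := fun i => T i ω) hinj hj hj'M (by rw [h, hj'c])
    rw [← hj't, h2]

section
variable {Ω : Type*} {n : ℕ} {T : Fin n → Ω → ℝ} {φ : Finset (Fin n) → ℝ}
  (hφ01 : ∀ A, φ A = 0 ∨ φ A = 1)
  (hφmono : ∀ A B : Finset (Fin n), A ⊆ B → φ A ≤ φ B)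
  (hφempty : φ ∅ = 0) (hφfull : φ (univ : Finset (Fin n)) = 1)

-- count trichotomy
lemma count_trichotomy {ω : Ω} {M : Finset (Fin n)}
    (hinj : Set.InjOn (fun i => T i ω) M) {j : Fin n} (hj : j ∈ M) :
    (M.filter fun i => T i ω < T j ω).card + (M.filter fun i => T j ω < T i ω).card + 1
      = M.card := by
  classical
  have h1 : (M.filter fun i => T i ω < T j ω).card
      + (M.filter fun i => ¬ T i ω < T j ω).card = M.card :=
    Finset.card_filter_add_card_filter_not _
  have h2 : (M.filter fun i => ¬ T i ω < T j ω) = insert j (M.filter fun i => T j ω < T i ω) := by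
    ext i
    simp only [mem_filter, mem_insert, not_lt]
    constructor
    · rintro ⟨hiM, hle⟩
      rcases eq_or_lt_of_le hle with heq | hlt
      · exact Or.inl (hinj hiM hj heq.symm)
      · exact Or.inr ⟨hiM, hlt⟩
    · rintro (rfl | ⟨hiM, hlt⟩)
      · exact ⟨hj, le_refl _⟩
      · exact ⟨hiM, le_of_lt hlt⟩
  have hjn : j ∉ (M.filter fun i => T j ω < T i ω) := by simp
  rw [h2, Finset.card_insert_of_notMem hjn] at h1
  omega

include hφmono hφempty hφfull in
lemma sysLife_eq_of (ω : Ω) {j : Fin n}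
    (hA0 : φ (univ.filter fun i => T j ω < T i ω) = 0)
    (hA1 : φ (insert j (univ.filter fun i => T j ω < T i ω)) = 1) :
    sysLifeOn T univ φ ω = T j ω := by
  classical
  set Aset := univ.filter fun i => T j ω < T i ω with hAset
  set F := univ.powerset.filter fun A => φ A = 1 with hF
  have hne : F.Nonempty := ⟨univ, by simp [hF, hφfull]⟩
  have hmem_ne : ∀ B ∈ F, B.Nonempty := by
    intro B hB
    rcases B.eq_empty_or_nonempty with rfl | h
    · exfalso; rw [hF, mem_filter] at hB; rw [hφempty] at hB; exact one_ne_zero hB.2.symm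
    · exact h
  rw [sysLifeOn, dif_pos hne]
  apply le_antisymm
  · apply Finset.sup'_le
    intro B hB
    have hBne := hmem_ne B hB
    rw [dif_pos hBne]
    have hBφ : φ B = 1 := (mem_filter.1 hB).2
    have : ¬ B ⊆ Aset := by
      intro hsub
      have := hφmono B Aset hsub
      rw [hBφ, hA0] at this; linarith
    obtain ⟨i, hiB, hiA⟩ := Finset.not_subset.1 this
    have : T i ω ≤ T j ω := by
      by_contra h
      exact hiA (by simp [hAset, lt_of_not_ge h])
    exact le_trans (Finset.inf'_le _ hiB) this
  · have hmem : insert j Aset ∈ F := by simp [hF, hA1]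
    have h := Finset.le_sup' (f := fun A => if hA : A.Nonempty then A.inf' hA fun i => T i ω else 0) hmem
    rw [dif_pos (insert_nonempty _ _)] at h
    refine le_trans ?_ h
    apply Finset.le_inf'
    intro i hi
    rcases Finset.mem_insert.1 hi with rfl | hi'
    · exact le_refl _
    · exact le_of_lt (by simpa [hAset] using hi')

include hφ01 hφmono hφempty hφfull in
lemma sysLife_eq_iff (ω : Ω) (hω : ∀ i i' : Fin n, i ≠ i' → T i ω ≠ T i' ω) {j : Fin n}
    (hsys : sysLifeOn T univ φ ω = T j ω) :
    φ (univ.filter fun i => T j ω < T i ω) = 0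
      ∧ φ (insert j (univ.filter fun i => T j ω < T i ω)) = 1 := by
  classical
  set Aset := univ.filter fun i => T j ω < T i ω with hAset
  set F := univ.powerset.filter fun A => φ A = 1 with hF
  have hne : F.Nonempty := ⟨univ, by simp [hF, hφfull]⟩
  have hmem_ne : ∀ B ∈ F, B.Nonempty := by
    intro B hB
    rcases B.eq_empty_or_nonempty with rfl | h
    · exfalso; rw [hF, mem_filter] at hB; rw [hφempty] at hB; exact one_ne_zero hB.2.symm
    · exact h
  rw [sysLifeOn, dif_pos hne] at hsys
  have hA0 : φ Aset = 0 := by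
    rcases hφ01 Aset with h | h
    · exact h
    · exfalso
      have hmem : Aset ∈ F := by simp [hF, h]
      have hAne : Aset.Nonempty := hmem_ne _ hmem
      have h1 := Finset.le_sup' (f := fun A => if hA : A.Nonempty then A.inf' hA fun i => T i ω else 0) hmem
      rw [dif_pos hAne] at h1
      obtain ⟨i0, hi0, hi0e⟩ := Finset.exists_mem_eq_inf' hAne (fun i => T i ω)
      have : T j ω < T i0 ω := by simpa [hAset] using hi0
      rw [hsys, hi0e] at h1
      linarith
  refine ⟨hA0, ?_⟩
  obtain ⟨B, hBF, hBe⟩ := Finset.exists_mem_eq_sup' hne (fun A => if hA : A.Nonempty then A.inf' hA fun i => T i ω else 0)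
  have hBne := hmem_ne B hBF
  rw [dif_pos hBne] at hBe
  rw [hBe] at hsys
  obtain ⟨i0, hi0, hi0e⟩ := Finset.exists_mem_eq_inf' hBne (fun i => T i ω)
  have hti0 : T i0 ω = T j ω := by rw [← hi0e, ← hsys]
  have hij : i0 = j := by
    by_contra h
    exact hω i0 j h hti0
  subst hij
  have hsub : B ⊆ insert i0 Aset := by
    intro i hiB
    have h1 : B.inf' hBne (fun i => T i ω) ≤ T i ω := Finset.inf'_le _ hiB
    rw [hsys] at h1
    rcases eq_or_lt_of_le h1 with heq | hlt
    · have : i = i0 := by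
        by_contra h
        exact hω i i0 (fun hc => h hc) heq.symm
      simp [this]
    · exact Finset.mem_insert_of_mem (by simp [hAset, hlt])
  have := hφmono B _ hsub
  rw [(mem_filter.1 hBF).2] at this
  rcases hφ01 (insert i0 Aset) with h | h
  · rw [h] at this; linarith
  · exact h

end

end AuxLemmas

theorem stmt_10 {Ω : Type*} [MeasurableSpace Ω] (μ : Measure Ω) [IsProbabilityMeasure μ]
    {n : ℕ} (T : Fin n → Ω → ℝ) (hTmeas : ∀ i, Measurable (T i))
    (hTnonneg : ∀ i ω, 0 ≤ T i ω)
    (hties : ∀ i j : Fin n, i ≠ j → μ {ω | T i ω = T j ω} = 0)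
    (φ : Finset (Fin n) → ℝ)
    (hφ01 : ∀ A, φ A = 0 ∨ φ A = 1)
    (hφmono : ∀ A B : Finset (Fin n), A ⊆ B → φ A ≤ φ B)
    (hφempty : φ ∅ = 0) (hφfull : φ Finset.univ = 1)
    (hq : ∀ (j : Fin n) (A : Finset (Fin n)), j ∉ A →
      relQual μ T j A = 1 / ((n : ℝ) * ((n - 1).choose A.card : ℕ)))
    (M : Finset (Fin n)) (hM : M.Nonempty) (k : ℕ) (hk1 : 1 ≤ k) (hkm : k ≤ M.card) :
    (μ {ω | sysLifeOn T Finset.univ φ ω = orderStat T M k ω}).toReal =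
      (∑ A ∈ (Finset.univ : Finset (Fin n)).powerset.filter
          (fun A => (M ∩ A).card = M.card - k + 1),
        (((M.card - k + 1 : ℕ) : ℝ) / ((n : ℝ) * ((n - 1).choose (A.card - 1) : ℕ))) * φ A)
      -
      (∑ A ∈ (Finset.univ : Finset (Fin n)).powerset.filter
          (fun A => (M ∩ A).card = M.card - k),
        ((k : ℝ) / ((n : ℝ) * ((n - 1).choose A.card : ℕ))) * φ A) := by
  classical
  set m := M.card with hm
  -- the elementary events
  set E : Fin n × Finset (Fin n) → Set Ω :=
    fun p => {ω | (∀ i ∉ p.2, T i ω ≤ T p.1 ω) ∧ ∀ i ∈ p.2, T p.1 ω < T i ω} with hE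
  set S : Finset (Fin n × Finset (Fin n)) :=
    univ.filter (fun p => p.1 ∈ M ∧ p.1 ∉ p.2 ∧ (M ∩ p.2).card = m - k ∧
      φ p.2 = 0 ∧ φ (insert p.1 p.2) = 1) with hS
  -- a.e. no ties
  have hN : ∀ᵐ ω ∂μ, ∀ i i' : Fin n, i ≠ i' → T i ω ≠ T i' ω := by
    rw [MeasureTheory.ae_all_iff]
    intro i
    rw [MeasureTheory.ae_all_iff]
    intro i'
    by_cases h : i = i'
    · exact Filter.Eventually.of_forall (fun ω hne => absurd h hne)
    · have h0 : ∀ᵐ ω ∂μ, T i ω ≠ T i' ω := by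
        rw [MeasureTheory.ae_iff]
        simpa using hties i i' h
      exact h0.mono (fun ω hω _ => hω)
  -- pointwise characterization
  have hpoint : ∀ ω, (∀ i i' : Fin n, i ≠ i' → T i ω ≠ T i' ω) →
      ((sysLifeOn T univ φ ω = orderStat T M k ω) ↔ ω ∈ ⋃ p ∈ S, E p) := by
    intro ω hω
    have hinj : Set.InjOn (fun i => T i ω) M := by
      intro i hi i' hi' h
      by_contra hne
      exact hω i i' hne h
    constructor
    · intro hsys
      obtain ⟨j, hjM, hjt, hjc⟩ := orderStat_exists hinj hk1 hkm
      set A := univ.filter (fun i => T j ω < T i ω) with hA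
      have hsys' : sysLifeOn T univ φ ω = T j ω := by rw [hsys, ← hjt]
      obtain ⟨hA0, hA1⟩ := sysLife_eq_iff hφ01 hφmono hφempty hφfull ω hω hsys'
      have hmem : (j, A) ∈ S := by
        rw [hS, mem_filter]
        refine ⟨mem_univ _, hjM, by simp [hA], ?_, hA0, hA1⟩
        show (M ∩ A).card = m - k
        have h1 : M ∩ A = M.filter (fun i => T j ω < T i ω) := by
          ext i; simp [hA, mem_filter]
        have h2 := count_trichotomy hinj hjM
        rw [h1]
        omega
      refine Set.mem_biUnion hmem ?_
      constructor
      · intro i hi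
        simp only [hA, mem_filter, mem_univ, true_and] at hi
        exact le_of_not_gt hi
      · intro i hi
        simp only [hA, mem_filter, mem_univ, true_and] at hi
        exact hi
    · intro hU
      obtain ⟨p, hpS, hpE⟩ := Set.mem_iUnion₂.1 hU
      obtain ⟨j, A⟩ := p
      rw [hS, mem_filter] at hpS
      dsimp only at hpS hpE
      obtain ⟨-, hjM, hjA, hcard, hA0, hA1⟩ := hpS
      obtain ⟨hle, hlt⟩ := hpE
      have hAeq : A = univ.filter (fun i => T j ω < T i ω) := by
        ext i
        simp only [mem_filter, mem_univ, true_and]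
        constructor
        · exact hlt i
        · intro h
          by_contra hiA
          exact absurd h (not_lt.2 (hle i hiA))
      have hsys : sysLifeOn T univ φ ω = T j ω := by
        apply sysLife_eq_of hφmono hφempty hφfull ω
        · rw [← hAeq]; exact hA0
        · rw [← hAeq]; exact hA1
      have hos : orderStat T M k ω = T j ω := by
        rw [orderStat_iff hinj hk1 hkm hjM]
        have h1 : M ∩ A = M.filter (fun i => T j ω < T i ω) := by
          rw [hAeq]; ext i; simp [mem_filter]
        have h2 := count_trichotomy hinj hjM
        rw [h1] at hcard
        omega
      rw [hsys, hos]
  -- measure of LHS equals measure of the union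
  have hμeq : μ {ω | sysLifeOn T univ φ ω = orderStat T M k ω} = μ (⋃ p ∈ S, E p) := by
    apply measure_congr
    rw [Filter.eventuallyEq_set]
    exact hN.mono (fun ω hω => hpoint ω hω)
  -- disjointness helper
  have hdisj_key : ∀ j A j' A' (ω : Ω), ω ∈ E (j, A) → ω ∈ E (j', A') →
      (M ∩ A).card = m - k → (M ∩ A').card = m - k → j ∈ M → j' ∈ M → j ∉ A → j' ∉ A' →
      T j ω < T j' ω → False := by
    intro j A j' A' ω h1 h2 hc1 hc2 hjM hj'M hjA hj'A' hlt
    obtain ⟨h1le, h1lt⟩ := h1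
    obtain ⟨h2le, h2lt⟩ := h2
    have hsub : insert j' (M ∩ A') ⊆ M ∩ A := by
      intro i hi
      rcases mem_insert.1 hi with rfl | hi'
      · refine mem_inter.2 ⟨hj'M, ?_⟩
        by_contra h
        exact absurd hlt (not_lt.2 (h1le i h))
      · obtain ⟨hiM, hiA'⟩ := mem_inter.1 hi'
        refine mem_inter.2 ⟨hiM, ?_⟩
        by_contra h
        have := h1le i h
        have := h2lt i hiA'
        linarith
    have hj'nm : j' ∉ M ∩ A' := fun h => hj'A' (mem_inter.1 h).2
    have := card_le_card hsub
    rw [card_insert_of_notMem hj'nm] at this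
    omega
  -- measurability
  have hmeas : ∀ p : Fin n × Finset (Fin n), MeasurableSet (E p) := by
    intro ⟨j, A⟩
    have e1 : E (j, A) = {ω | ∀ i ∉ A, T i ω ≤ T j ω} ∩ {ω | ∀ i ∈ A, T j ω < T i ω} := rfl
    rw [e1]
    apply MeasurableSet.inter
    · have : {ω | ∀ i ∉ A, T i ω ≤ T j ω} = ⋂ i ∈ {i | i ∉ A}, {ω | T i ω ≤ T j ω} := by
        ext ω; simp
      rw [this]
      exact MeasurableSet.biInter (Set.to_countable _)
        (fun i _ => measurableSet_le (hTmeas i) (hTmeas j))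
    · have : {ω | ∀ i ∈ A, T j ω < T i ω} = ⋂ i ∈ {i | i ∈ A}, {ω | T j ω < T i ω} := by
        ext ω; simp
      rw [this]
      exact MeasurableSet.biInter (Set.to_countable _)
        (fun i _ => measurableSet_lt (hTmeas j) (hTmeas i))
  -- sum decomposition
  have hμsum : μ (⋃ p ∈ S, E p) = ∑ p ∈ S, μ (E p) := by
    apply measure_biUnion_finset₀
    · intro p hp q hq hpq
      rw [Finset.mem_coe, hS, mem_filter] at hp hq
      obtain ⟨-, hp1, hp2, hp3, -, -⟩ := hp
      obtain ⟨-, hq1, hq2, hq3, -, -⟩ := hq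
      by_cases hjj : p.1 = q.1
      · -- same j, different A : truly disjoint
        have hAA : p.2 ≠ q.2 := by
          intro h
          exact hpq (Prod.ext hjj h)
        have : E p ∩ E q = ∅ := by
          ext ω
          simp only [Set.mem_inter_iff, Set.mem_empty_iff_false, iff_false]
          rintro ⟨⟨hp_le, hp_lt⟩, ⟨hq_le, hq_lt⟩⟩
          have : ∃ i, (i ∈ p.2 ∧ i ∉ q.2) ∨ (i ∈ q.2 ∧ i ∉ p.2) := by
            by_contra hc
            push_neg at hc
            apply hAA
            ext i
            have := hc i
            tauto
          obtain ⟨i, hi | hi⟩ := this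
          · have h1 := hp_lt i hi.1
            have h2 := hq_le i hi.2
            rw [hjj] at h1
            linarith
          · have h1 := hq_lt i hi.1
            have h2 := hp_le i hi.2
            rw [hjj] at h2
            linarith
        unfold MeasureTheory.AEDisjoint
        rw [Function.onFun, this]
        exact measure_empty
      · -- different j : contained in tie set
        have hsub : E p ∩ E q ⊆ {ω | T p.1 ω = T q.1 ω} := by
          intro ω ⟨hωp, hωq⟩
          by_contra hne
          rcases lt_or_gt_of_ne hne with hlt | hlt
          · exact hdisj_key p.1 p.2 q.1 q.2 ω hωp hωq hp3 hq3 hp1 hq1 hp2 hq2 hlt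
          · exact hdisj_key q.1 q.2 p.1 p.2 ω hωq hωp hq3 hp3 hq1 hp1 hq2 hp2 hlt
        exact measure_mono_null hsub (hties p.1 q.1 hjj)
    · exact fun p _ => (hmeas p).nullMeasurableSet
  -- compute each term
  have hterm : ∀ p ∈ S, (μ (E p)).toReal
      = 1 / ((n : ℝ) * ((n - 1).choose p.2.card : ℕ)) := by
    intro p hp
    rw [hS, mem_filter] at hp
    have : (μ (E p)).toReal = relQual μ T p.1 p.2 := rfl
    rw [this, hq p.1 p.2 hp.2.2.1]
  -- putting measure part together
  have hLHS : (μ {ω | sysLifeOn T univ φ ω = orderStat T M k ω}).toReal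
      = ∑ p ∈ S, 1 / ((n : ℝ) * ((n - 1).choose p.2.card : ℕ)) := by
    rw [hμeq, hμsum, ENNReal.toReal_sum (fun p _ => measure_ne_top μ _)]
    exact Finset.sum_congr rfl hterm
  rw [hLHS]
  -- now the combinatorial identity
  set c : ℕ → ℝ := fun s => 1 / ((n : ℝ) * ((n - 1).choose s : ℕ)) with hc
  set S' : Finset (Fin n × Finset (Fin n)) :=
    univ.filter (fun p => p.1 ∈ M ∧ p.1 ∉ p.2 ∧ (M ∩ p.2).card = m - k) with hS'
  have hSS' : S = S'.filter (fun p => φ p.2 = 0 ∧ φ (insert p.1 p.2) = 1) := by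
    rw [hS, hS', filter_filter]
    apply filter_congr
    intro p _
    tauto
  have hF1 : ∑ p ∈ S, c p.2.card
      = ∑ p ∈ S', c p.2.card * (φ (insert p.1 p.2) - φ p.2) := by
    rw [hSS', Finset.sum_filter]
    apply Finset.sum_congr rfl
    intro p _
    rcases hφ01 p.2 with h0 | h0 <;> rcases hφ01 (insert p.1 p.2) with h1 | h1
    · simp [h0, h1]
    · simp [h0, h1]
    · exfalso
      have := hφmono p.2 (insert p.1 p.2) (subset_insert _ _)
      rw [h0, h1] at this
      linarith
    · simp [h0, h1]
  have hF2 : ∑ p ∈ S', c p.2.card * φ (insert p.1 p.2)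
      = ∑ A ∈ (Finset.univ : Finset (Fin n)).powerset.filter
          (fun A => (M ∩ A).card = m - k + 1),
        (((m - k + 1 : ℕ) : ℝ) / ((n : ℝ) * ((n - 1).choose (A.card - 1) : ℕ))) * φ A := by
    set S'' : Finset (Fin n × Finset (Fin n)) :=
      univ.filter (fun p => p.1 ∈ M ∧ p.1 ∈ p.2 ∧ (M ∩ p.2).card = m - k + 1) with hS''
    have step1 : ∑ p ∈ S', c p.2.card * φ (insert p.1 p.2)
        = ∑ p ∈ S'', c (p.2.card - 1) * φ p.2 := by
      apply Finset.sum_nbij' (fun p => (p.1, insert p.1 p.2)) (fun p => (p.1, p.2.erase p.1))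
      · intro p hp
        rw [hS', mem_filter] at hp
        obtain ⟨-, h1, h2, h3⟩ := hp
        rw [hS'', mem_filter]
        refine ⟨mem_univ _, h1, mem_insert_self _ _, ?_⟩
        rw [inter_insert_of_mem h1, card_insert_of_notMem (fun h => h2 (mem_inter.1 h).2), h3]
      · intro p hp
        rw [hS'', mem_filter] at hp
        obtain ⟨-, h1, h2, h3⟩ := hp
        rw [hS', mem_filter]
        refine ⟨mem_univ _, h1, notMem_erase _ _, ?_⟩
        rw [inter_erase, card_erase_of_mem (mem_inter.2 ⟨h1, h2⟩), h3]
        omega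
      · intro p hp
        rw [hS', mem_filter] at hp
        exact Prod.ext rfl (erase_insert hp.2.2.1)
      · intro p hp
        rw [hS'', mem_filter] at hp
        exact Prod.ext rfl (insert_erase hp.2.2.1)
      · intro p hp
        rw [hS', mem_filter] at hp
        rw [card_insert_of_notMem hp.2.2.1]
        simp
    rw [step1]
    rw [Finset.sum_finset_product_right _
      ((Finset.univ : Finset (Fin n)).powerset.filter
          (fun A => (M ∩ A).card = m - k + 1))
      (fun A => M ∩ A)
      (by
        intro p
        rw [hS'', mem_filter, mem_filter, mem_inter]
        simp only [mem_univ, true_and, mem_powerset, subset_univ]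
        tauto)]
    apply Finset.sum_congr rfl
    intro A hA
    rw [mem_filter] at hA
    have hval : ∀ j ∈ M ∩ A, c ((j, A).2.card - 1) * φ (j, A).2 = c (A.card - 1) * φ A :=
      fun j _ => rfl
    rw [Finset.sum_congr rfl hval, Finset.sum_const, hA.2, nsmul_eq_mul, hc]
    push_cast
    ring
  have hF3 : ∑ p ∈ S', c p.2.card * φ p.2
      = ∑ A ∈ (Finset.univ : Finset (Fin n)).powerset.filter
          (fun A => (M ∩ A).card = m - k),
        ((k : ℝ) / ((n : ℝ) * ((n - 1).choose A.card : ℕ))) * φ A := by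
    rw [Finset.sum_finset_product_right _
      ((Finset.univ : Finset (Fin n)).powerset.filter
          (fun A => (M ∩ A).card = m - k))
      (fun A => M \ A)
      (by
        intro p
        rw [hS', mem_filter, mem_filter, mem_sdiff]
        simp only [mem_univ, true_and, mem_powerset, subset_univ]
        tauto)]
    apply Finset.sum_congr rfl
    intro A hA
    rw [mem_filter] at hA
    have hcard : (M \ A).card = k := by
      have := Finset.card_inter_add_card_sdiff M A
      rw [hA.2] at this
      omega
    have hval : ∀ j ∈ M \ A, c (j, A).2.card * φ (j, A).2 = c A.card * φ A :=
      fun j _ => rfl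
    rw [Finset.sum_congr rfl hval, Finset.sum_const, hcard, nsmul_eq_mul, hc]
    push_cast
    ring
  calc ∑ p ∈ S, c p.2.card
      = ∑ p ∈ S', c p.2.card * (φ (insert p.1 p.2) - φ p.2) := hF1
    _ = ∑ p ∈ S', c p.2.card * φ (insert p.1 p.2) - ∑ p ∈ S', c p.2.card * φ p.2 := by
        rw [← Finset.sum_sub_distrib]
        apply Finset.sum_congr rfl
        intro p _
        ring
    _ = _ := by rw [hF2, hF3]
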